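/- Let a ∈ {−1, 0, 1} and let R₀ > 0. Suppose w is a ℂ-valued function defined for all z ∈ ℂ with |z| > R₀, satisfying z·w(z)³ − w(z)² − z·w(z) + 1/3 = 0 for all such z, and suppose w(z) → a as z → ∞ (i.e. along the filter of complements of bounded sets in ℂ). Then z·(w(z) − a) → 1/3 as z → ∞. -/

import Mathlib

open Filter

theorem branch_asymptotics_at_infinity (a : ℂ) (ha : a = -1 ∨ a = 0 ∨ a = 1)
    (R₀ : ℝ) (hR₀ : 0 < R₀) (w : ℂ → ℂ)
    (hcubic : ∀ z : ℂ, R₀ < ‖z‖ →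
      z * w z ^ 3 - w z ^ 2 - z * w z + 1 / 3 = 0)
    (hlim : Tendsto w (Bornology.cobounded ℂ) (nhds a)) :
    Tendsto (fun z : ℂ => z * (w z - a)) (Bornology.cobounded ℂ) (nhds (1 / 3)) := by
  have ha3 : a ^ 3 = a := by rcases ha with h | h | h <;> rw [h] <;> ring
  have hc : (3 * a ^ 2 - 1 : ℂ) ≠ 0 := by
    rcases ha with h | h | h <;> rw [h] <;> norm_num
  have hg : Tendsto (fun z => w z ^ 2 + a * w z + a ^ 2 - 1)
      (Bornology.cobounded ℂ) (nhds (3 * a ^ 2 - 1)) := by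
    have h := (((hlim.pow 2).add (hlim.const_mul a)).add
      (tendsto_const_nhds : Tendsto (fun _ : ℂ => a ^ 2 - 1) _ _))
    have : a ^ 2 + a * a + (a ^ 2 - 1) = 3 * a ^ 2 - 1 := by ring
    rw [this] at h
    convert h using 2 with z
    ring
  have hdiv : Tendsto (fun z => (w z ^ 2 - 1 / 3) / (w z ^ 2 + a * w z + a ^ 2 - 1))
      (Bornology.cobounded ℂ) (nhds ((a ^ 2 - 1 / 3) / (3 * a ^ 2 - 1))) :=
    ((hlim.pow 2).sub tendsto_const_nhds).div hg hc
  have hval : (a ^ 2 - 1 / 3) / (3 * a ^ 2 - 1) = (1 : ℂ) / 3 := by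
    rcases ha with h | h | h <;> rw [h] <;> norm_num
  rw [hval] at hdiv
  refine hdiv.congr' ?_
  have h1 : ∀ᶠ z : ℂ in Bornology.cobounded ℂ, R₀ < ‖z‖ := by
    have := tendsto_norm_cobounded_atTop (E := ℂ)
    exact this.eventually_gt_atTop R₀
  have h2 : ∀ᶠ z : ℂ in Bornology.cobounded ℂ, w z ^ 2 + a * w z + a ^ 2 - 1 ≠ 0 :=
    hg.eventually_ne hc
  filter_upwards [h1, h2] with z hz hgz
  rw [div_eq_iff hgz]
  linear_combination -hcubic z hz + z * ha3
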